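/- ∫_0^∞ ∫_0^∞ x y / (1 + x² + y² + x² y² + x⁴)^4 dx dy = 7(−9 + 2√3 π)/648. -/

import Mathlib

open MeasureTheory Real Filter Set Topology

noncomputable def Hfun (x : ℝ) : ℝ :=
  (1/24) * Real.log ((1 + x ^ 2) ^ 2 / (1 + x ^ 2 + x ^ 4))
  + (7 * Real.sqrt 3 / 108) * Real.arctan ((2 * x ^ 2 + 1) / Real.sqrt 3)
  + (4 * x ^ 2 + 5) / (72 * (1 + x ^ 2 + x ^ 4))
  + (x ^ 2 + 2) / (72 * (1 + x ^ 2 + x ^ 4) ^ 2)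

lemma Hderiv (x : ℝ) :
    HasDerivAt Hfun (x / (6 * (1 + x ^ 2) * (1 + x ^ 2 + x ^ 4) ^ 3)) x := by
  have hs0 : (0:ℝ) < Real.sqrt 3 := by positivity
  have hs3 : Real.sqrt 3 ^ 2 = 3 := Real.sq_sqrt (by norm_num)
  have hQ : (0:ℝ) < 1 + x ^ 2 + x ^ 4 := by positivity
  have hb : (0:ℝ) < 1 + x ^ 2 := by positivity
  have h2 : HasDerivAt (fun x : ℝ => 1 + x ^ 2) (2 * x) x := by
    simpa using ((hasDerivAt_pow 2 x).const_add (1:ℝ))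
  have h4 : HasDerivAt (fun x : ℝ => 1 + x ^ 2 + x ^ 4) (2 * x + 4 * x ^ 3) x := by
    refine (((hasDerivAt_pow 2 x).const_add (1:ℝ)).add (hasDerivAt_pow 4 x)).congr_deriv ?_; norm_num
  -- log term
  have hu := (h2.pow 2).div h4 hQ.ne'
  have hune : (1 + x ^ 2) ^ 2 / (1 + x ^ 2 + x ^ 4) ≠ 0 := by positivity
  have hlog := (hu.log hune).const_mul ((1:ℝ)/24)
  -- arctan term
  have hat : HasDerivAt (fun x : ℝ => Real.arctan ((2 * x ^ 2 + 1) / Real.sqrt 3))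
      (Real.sqrt 3 * x / (1 + x ^ 2 + x ^ 4)) x := by
    have hv : HasDerivAt (fun x : ℝ => (2 * x ^ 2 + 1) / Real.sqrt 3)
        (4 * x / Real.sqrt 3) x := by
      have := (((hasDerivAt_pow 2 x).const_mul (2:ℝ)).add_const (1:ℝ)).div_const (Real.sqrt 3)
      refine this.congr_deriv (Eq.symm ?_)
      push_cast; ring
    have := hv.arctan
    refine this.congr_deriv (Eq.symm ?_)
    have key : 1 + ((2 * x ^ 2 + 1) / Real.sqrt 3) ^ 2 = 4 * (1 + x ^ 2 + x ^ 4) / 3 := by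
      rw [div_pow, hs3]; field_simp; ring
    rw [key]; field_simp; linear_combination x * hs3
  have hat2 := hat.const_mul (7 * Real.sqrt 3 / 108)
  have hat3 : HasDerivAt (fun x : ℝ => (7 * Real.sqrt 3 / 108) * Real.arctan ((2 * x ^ 2 + 1) / Real.sqrt 3))
      (7 * x / (36 * (1 + x ^ 2 + x ^ 4))) x := by
    refine hat2.congr_deriv (Eq.symm ?_)
    field_simp; linear_combination (-(36 * x)) * hs3
  -- rational terms
  have hr1 := (((hasDerivAt_pow 2 x).const_mul (4:ℝ)).add_const (5:ℝ)).div
      (h4.const_mul (72:ℝ)) (by positivity)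
  have hr2 := ((hasDerivAt_pow 2 x).add_const (2:ℝ)).div
      ((h4.pow 2).const_mul (72:ℝ)) (by simp only [Pi.pow_apply]; positivity)
  have htotal := ((hlog.add hat3).add hr1).add hr2
  refine htotal.congr_deriv (Eq.symm ?_)
  have h1 : ((1:ℝ) + x ^ 2) ^ 2 / (1 + x ^ 2 + x ^ 4) > 0 := by positivity
  simp only [Pi.pow_apply, Pi.div_apply]
  norm_num
  field_simp
  ring

lemma Htendsto : Tendsto Hfun atTop (𝓝 (7 * Real.sqrt 3 * π / 216)) := by
  have hs0 : (0:ℝ) < Real.sqrt 3 := by positivity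
  have hinv : Tendsto (fun x : ℝ => (x ^ 2)⁻¹) atTop (𝓝 0) :=
    tendsto_inv_atTop_zero.comp (tendsto_pow_atTop two_ne_zero)
  -- log term
  have t_log : Tendsto (fun x : ℝ => (1/24) * Real.log ((1 + x ^ 2) ^ 2 / (1 + x ^ 2 + x ^ 4)))
      atTop (𝓝 0) := by
    have hu0 : Tendsto (fun x : ℝ => x ^ 2 / (1 + x ^ 2 + x ^ 4)) atTop (𝓝 0) := by
      apply squeeze_zero' (g := fun x : ℝ => (x ^ 2)⁻¹)
      · filter_upwards [eventually_gt_atTop (0:ℝ)] with x hx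
        positivity
      · filter_upwards [eventually_gt_atTop (0:ℝ)] with x hx
        rw [div_le_iff₀ (by positivity), inv_mul_eq_div, le_div_iff₀ (by positivity)]
        nlinarith [sq_nonneg x]
      · exact hinv
    have hu1 : Tendsto (fun x : ℝ => (1 + x ^ 2) ^ 2 / (1 + x ^ 2 + x ^ 4)) atTop (𝓝 1) := by
      have heq : ∀ x : ℝ, (1 + x ^ 2) ^ 2 / (1 + x ^ 2 + x ^ 4)
          = 1 + x ^ 2 / (1 + x ^ 2 + x ^ 4) := by
        intro x
        have hQ : (0:ℝ) < 1 + x ^ 2 + x ^ 4 := by positivity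
        field_simp; ring
      simp_rw [heq]
      simpa using (tendsto_const_nhds.add hu0)
    have := ((Real.continuousAt_log one_ne_zero).tendsto.comp hu1).const_mul ((1:ℝ)/24)
    simpa using this
  -- arctan term
  have t_at : Tendsto (fun x : ℝ => (7 * Real.sqrt 3 / 108) * Real.arctan ((2 * x ^ 2 + 1) / Real.sqrt 3))
      atTop (𝓝 (7 * Real.sqrt 3 * π / 216)) := by
    have harg : Tendsto (fun x : ℝ => (2 * x ^ 2 + 1) / Real.sqrt 3) atTop atTop := by
      apply Tendsto.atTop_div_const hs0
      apply tendsto_atTop_add_const_right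
      exact (tendsto_pow_atTop two_ne_zero).const_mul_atTop (by norm_num)
    have := ((Real.tendsto_arctan_atTop.mono_right nhdsWithin_le_nhds).comp harg).const_mul
      (7 * Real.sqrt 3 / 108)
    convert this using 2
    · rfl
    · ring
  -- rational terms
  have t_r1 : Tendsto (fun x : ℝ => (4 * x ^ 2 + 5) / (72 * (1 + x ^ 2 + x ^ 4))) atTop (𝓝 0) := by
    apply squeeze_zero' (g := fun x : ℝ => (x ^ 2)⁻¹)
    · filter_upwards [eventually_gt_atTop (0:ℝ)] with x hx; positivity
    · filter_upwards [eventually_gt_atTop (0:ℝ)] with x hx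
      rw [div_le_iff₀ (by positivity), inv_mul_eq_div, le_div_iff₀ (by positivity)]
      nlinarith [sq_nonneg x]
    · exact hinv
  have t_r2 : Tendsto (fun x : ℝ => (x ^ 2 + 2) / (72 * (1 + x ^ 2 + x ^ 4) ^ 2)) atTop (𝓝 0) := by
    apply squeeze_zero' (g := fun x : ℝ => (x ^ 2)⁻¹)
    · filter_upwards [eventually_gt_atTop (0:ℝ)] with x hx; positivity
    · filter_upwards [eventually_gt_atTop (0:ℝ)] with x hx
      rw [div_le_iff₀ (by positivity), inv_mul_eq_div, le_div_iff₀ (by positivity)]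
      nlinarith [sq_nonneg x, sq_nonneg (x^2), sq_nonneg (x^3), sq_nonneg (x^4), sq_nonneg (1+x^2+x^4)]
    · exact hinv
  have h := ((t_log.add t_at).add t_r1).add t_r2
  simp only [zero_add, add_zero] at h
  exact h

lemma outer_int :
    ∫ x in Set.Ioi (0:ℝ), x / (6 * (1 + x ^ 2) * (1 + x ^ 2 + x ^ 4) ^ 3)
      = 7 * (-9 + 2 * Real.sqrt 3 * Real.pi) / 648 := by
  have hderiv : ∀ x ∈ Set.Ici (0:ℝ),
      HasDerivAt Hfun (x / (6 * (1 + x ^ 2) * (1 + x ^ 2 + x ^ 4) ^ 3)) x :=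
    fun x _ => Hderiv x
  have hpos : ∀ x ∈ Set.Ioi (0:ℝ), 0 ≤ x / (6 * (1 + x ^ 2) * (1 + x ^ 2 + x ^ 4) ^ 3) := by
    intro x hx
    exact div_nonneg hx.out.le (by positivity)
  rw [integral_Ioi_of_hasDerivAt_of_nonneg' hderiv hpos Htendsto]
  have harc : Real.arctan ((2 * (0:ℝ) ^ 2 + 1) / Real.sqrt 3) = π / 6 := by
    have h1 : ((2 * (0:ℝ) ^ 2 + 1) / Real.sqrt 3) = 1 / Real.sqrt 3 := by norm_num
    rw [h1, ← Real.tan_pi_div_six, Real.arctan_tan] <;> linarith [Real.pi_pos]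
  simp only [Hfun]
  rw [harc]
  norm_num
  ring


lemma inner_int (x : ℝ) (hx : 0 < x) :
    ∫ y in Set.Ioi (0:ℝ), x * y / (1 + x ^ 2 + y ^ 2 + x ^ 2 * y ^ 2 + x ^ 4) ^ 4
      = x / (6 * (1 + x ^ 2) * (1 + x ^ 2 + x ^ 4) ^ 3) := by
  have hb : (0:ℝ) < 1 + x ^ 2 := by positivity
  have hE : ∀ y : ℝ, (0:ℝ) < (1 + x ^ 2 + x ^ 4) + (1 + x ^ 2) * y ^ 2 := fun y => by positivity
  set F : ℝ → ℝ := fun y => -x / (6 * (1 + x ^ 2) * ((1 + x ^ 2 + x ^ 4) + (1 + x ^ 2) * y ^ 2) ^ 3) with hF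
  have hderiv : ∀ y ∈ Ici (0:ℝ),
      HasDerivAt F (x * y / (1 + x ^ 2 + y ^ 2 + x ^ 2 * y ^ 2 + x ^ 4) ^ 4) y := by
    intro y _
    have hne : 6 * (1 + x ^ 2) * ((1 + x ^ 2 + x ^ 4) + (1 + x ^ 2) * y ^ 2) ^ 3 ≠ 0 := by positivity
    have h1 : HasDerivAt (fun y : ℝ => (1 + x ^ 2 + x ^ 4) + (1 + x ^ 2) * y ^ 2)
        ((1 + x ^ 2) * (2 * y)) y := by
      simpa using (((hasDerivAt_pow 2 y).const_mul ((1:ℝ) + x ^ 2)).const_add ((1:ℝ) + x ^ 2 + x ^ 4))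
    have hd := (h1.pow 3).const_mul (6 * (1 + x ^ 2))
    have hdiv := (hasDerivAt_const y (-x)).div hd hne
    refine hdiv.congr_deriv (Eq.symm ?_)
    have h2 : (0:ℝ) < 1 + x ^ 2 + y ^ 2 + x ^ 2 * y ^ 2 + x ^ 4 := by positivity
    simp only [Pi.pow_apply]
    norm_num
    field_simp
    ring
  have hpos : ∀ y ∈ Ioi (0:ℝ), 0 ≤ x * y / (1 + x ^ 2 + y ^ 2 + x ^ 2 * y ^ 2 + x ^ 4) ^ 4 := by
    intro y hy
    have h2 : (0:ℝ) < 1 + x ^ 2 + y ^ 2 + x ^ 2 * y ^ 2 + x ^ 4 := by positivity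
    exact div_nonneg (mul_nonneg hx.le hy.out.le) (by positivity)
  have hlim : Tendsto F atTop (𝓝 0) := by
    apply Filter.Tendsto.div_atTop (tendsto_const_nhds)
    have t1 : Tendsto (fun y : ℝ => (1 + x ^ 2 + x ^ 4) + (1 + x ^ 2) * y ^ 2) atTop atTop := by
      apply tendsto_atTop_add_const_left
      exact (tendsto_pow_atTop two_ne_zero).const_mul_atTop hb
    have t2 : Tendsto (fun y : ℝ => ((1 + x ^ 2 + x ^ 4) + (1 + x ^ 2) * y ^ 2) ^ 3) atTop atTop :=
      (tendsto_pow_atTop three_ne_zero).comp t1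
    exact t2.const_mul_atTop (by positivity)
  rw [integral_Ioi_of_hasDerivAt_of_nonneg' hderiv hpos hlim]
  rw [hF]
  norm_num
  rw [neg_div, neg_neg]

theorem quadrant_integral_13 :
    ∫ x in Set.Ioi (0:ℝ), ∫ y in Set.Ioi (0:ℝ), x * y / (1 + x ^ 2 + y ^ 2 + x ^ 2 * y ^ 2 + x ^ 4) ^ 4 = 7 * (-9 + 2 * Real.sqrt 3 * Real.pi) / 648 := by
  rw [MeasureTheory.setIntegral_congr_fun measurableSet_Ioi
    (fun x hx => inner_int x hx)]
  exact outer_int
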